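/- arXiv:1508.05080 — 6 statements merged into one kernel-verified Lean document; each statement's English description precedes it below -/
import Mathlib

section
/- Let α = p/q ∈ ℚ>0 and let 0 = c₀/d₀ < c₁/d₁ < ⋯ < c_r/d_r = p/q be the convergents of the Hirzebruch–Jung continued fraction expansion of α. Then for every i > 1 and every pair (s, t) of positive integers with s + t = dᵢ and every pair of nonnegative integers (γ, δ) with γ + δ = cᵢ, γ ≤ s·α, and δ ≤ t·α, we get a contradiction; i.e., (dᵢ, cᵢ) cannot be written as a sum of two lattice points (s,γ) and (t,δ) below the line of slope α with s, t ≥ 1. Equivalently: each convergent point (dᵢ, cᵢ) is an indecomposable element of the semigroup {(d, c) ∈ ℤ≥0² : c ≤ d·α}. -/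
/-- each Hirzebruch–Jung convergent point (dᵢ, cᵢ) is indecomposable in the
semigroup of lattice points on or below the line of slope α. -/
theorem stmt2 (α : ℚ) (hα : 0 < α) (r : ℕ) (c d : Fin (r+1) → ℕ)
    (hdpos : ∀ i, 0 < d i)
    (hinc : ∀ i j : Fin (r+1), i < j → (c i : ℚ) / (d i : ℚ) < (c j : ℚ) / (d j : ℚ))
    (hlast : (c (Fin.last r) : ℚ) / (d (Fin.last r) : ℚ) = α)
    (hbest : ∀ (i : Fin (r+1)) (s γ : ℕ), 0 < s → s < d i →
      (γ : ℚ) ≤ (s : ℚ) * α → (γ : ℚ) / (s : ℚ) < (c i : ℚ) / (d i : ℚ)) :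
    ∀ i : Fin (r+1), 1 < (i : ℕ) →
      ¬ ∃ s t γ δ : ℕ, 0 < s ∧ 0 < t ∧ s + t = d i ∧ γ + δ = c i ∧
        (γ : ℚ) ≤ (s : ℚ) * α ∧ (δ : ℚ) ≤ (t : ℚ) * α := by
  intro i _
  rintro ⟨s, t, γ, δ, hs, ht, hst, hgd, hγ, hδ⟩
  have hsd : s < d i := by omega
  have htd : t < d i := by omega
  have h1 := hbest i s γ hs hsd hγ
  have h2 := hbest i t δ ht htd hδ
  have hsq : (0:ℚ) < s := by exact_mod_cast hs
  have htq : (0:ℚ) < t := by exact_mod_cast ht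
  have hdq : (0:ℚ) < d i := by exact_mod_cast hdpos i
  rw [div_lt_div_iff₀ hsq hdq] at h1
  rw [div_lt_div_iff₀ htq hdq] at h2
  have key : ((γ + δ : ℕ) : ℚ) * (d i) < (c i) * ((s + t : ℕ) : ℚ) := by
    push_cast; linarith
  rw [hgd, hst] at key
  linarith
end

section
/- Fix m ≥ 1 and integers c₀, …, c_r ≥ 0. For each i let Sᵢ = {v ∈ ℤ≥0^{m+1} : v₀ + ⋯ + v_m = cᵢ}. Define a relation on ℤ^{m+1}: v ≺ w iff max{index of nonzero entry of v} ≤ min{index of nonzero entry of w}. Then for any i, j and any v ∈ Sᵢ, w ∈ Sⱼ, there exist unique y ∈ Sᵢ and z ∈ Sⱼ with y + z = v + w and y ≺ z. -/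
/-- v ≺ w : every nonzero coordinate of v has index at most that of every nonzero
coordinate of w. -/
def s4Prec (m : ℕ) (v w : Fin (m+1) → ℕ) : Prop :=
  ∀ i j, v i ≠ 0 → w j ≠ 0 → i ≤ j

/-- unique ordered splitting y + z = v + w with |y| = |v|, |z| = |w|, y ≺ z. -/
theorem stmt4 (m : ℕ) (ci cj : ℕ) (v w : Fin (m+1) → ℕ)
    (hv : ∑ i, v i = ci) (hw : ∑ i, w i = cj) :
    ∃! yz : (Fin (m+1) → ℕ) × (Fin (m+1) → ℕ),
      (∑ i, yz.1 i = ci) ∧ (∑ i, yz.2 i = cj) ∧ yz.1 + yz.2 = v + w ∧ s4Prec m yz.1 yz.2 := by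
  classical
  set s' : ℕ → ℕ := fun k => if h : k < m+1 then v ⟨k,h⟩ + w ⟨k,h⟩ else 0 with hs'
  have hs'eq : ∀ i : Fin (m+1), s' i = v i + w i := by
    intro i; simp [hs', i.isLt]; intro h; exact absurd h (Nat.not_lt.2 (Nat.lt_succ_iff.1 i.isLt))
  set B : ℕ → ℕ := fun n => ∑ k ∈ Finset.range n, s' k with hB
  have hBmono : Monotone B := by
    intro a b hab
    exact Finset.sum_le_sum_of_subset (Finset.range_subset_range.2 hab)
  have hBsucc : ∀ n, B (n+1) = B n + s' n := by
    intro n; simp [hB, Finset.sum_range_succ]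
  have hBtot : B (m+1) = ci + cj := by
    have h0 : ∑ i : Fin (m+1), s' ↑i = ∑ k ∈ Finset.range (m+1), s' k :=
      Fin.sum_univ_eq_sum_range s' (m+1)
    simp only [hB]
    rw [← h0, Finset.sum_congr rfl (fun i _ => hs'eq i), Finset.sum_add_distrib, hv, hw]
  set g : ℕ → ℕ := fun n => min ci (B n) with hg
  have hgmono : Monotone g := fun a b hab => min_le_min le_rfl (hBmono hab)
  have hgle : ∀ n, g n ≤ ci := fun n => min_le_left _ _
  set y : Fin (m+1) → ℕ := fun i => g (i+1) - g i with hy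
  have hyle : ∀ i : Fin (m+1), y i ≤ v i + w i := by
    intro i
    have h1 : g (↑i+1) ≤ g ↑i + s' ↑i := by
      have := hBsucc ↑i
      simp only [hg]
      omega
    rw [← hs'eq i]
    simp only [hy]
    omega
  set z : Fin (m+1) → ℕ := fun i => (v i + w i) - y i with hz
  have hyz : ∀ i, y i + z i = v i + w i := by
    intro i; have := hyle i; simp only [hz]; omega
  have hsumy : ∑ i, y i = ci := by
    have h1 : ∑ i : Fin (m+1), y i = ∑ k ∈ Finset.range (m+1), (g (k+1) - g k) := by
      exact Fin.sum_univ_eq_sum_range (fun k => g (k+1) - g k) (m+1)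
    rw [h1, Finset.sum_range_tsub hgmono]
    have hB0 : B 0 = 0 := by simp [hB]
    simp only [hg]
    omega
  have hsumz : ∑ i, z i = cj := by
    have h1 : ∑ i, (y i + z i) = ∑ i, (v i + w i) := Finset.sum_congr rfl (fun i _ => hyz i)
    rw [Finset.sum_add_distrib, Finset.sum_add_distrib, hv, hw, hsumy] at h1
    omega
  have hprec : s4Prec m y z := by
    intro j i hyj hzi
    -- y j ≠ 0 ⇒ B j < ci ; z i ≠ 0 ⇒ ci < B (i+1)
    have h1 : B (↑j : ℕ) < ci := by
      by_contra h
      push_neg at h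
      have : g ↑j = ci := by simp only [hg]; omega
      have h2 : g (↑j+1) ≤ ci := hgle _
      have h3 : g ↑j ≤ g (↑j+1) := hgmono (by omega)
      simp only [hy] at hyj
      omega
    have h2 : ci < B (↑i+1) := by
      by_contra h
      push_neg at h
      have hb : B ↑i ≤ B (↑i+1) := hBmono (by omega)
      have : g (↑i+1) = B (↑i+1) := by simp only [hg]; omega
      have : g ↑i = B ↑i := by simp only [hg]; omega
      have hyi : y i = s' ↑i := by simp only [hy]; have := hBsucc ↑i; omega
      have := hs'eq i
      have := hyz i
      omega
    by_contra h
    push_neg at h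
    have : (↑i+1 : ℕ) ≤ ↑j := h
    have := hBmono this
    omega
  refine ⟨(y, z), ⟨hsumy, hsumz, ?_, hprec⟩, ?_⟩
  · funext i; exact hyz i
  · rintro ⟨y', z'⟩ ⟨hy'sum, hz'sum, hadd', hprec'⟩
    have hyz' : ∀ i, y' i + z' i = v i + w i := fun i => congrFun hadd' i
    have hadd : y + z = v + w := funext hyz
    -- general lemma: any two solutions satisfy a i ≤ b i pointwise
    have key : ∀ (a b c d : Fin (m+1) → ℕ), (∑ i, a i = ci) → (∑ i, c i = ci) →
        (∀ i, a i + b i = v i + w i) → (∀ i, c i + d i = v i + w i) →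
        s4Prec m a b → s4Prec m c d → ∀ i, a i ≤ c i := by
      intro a b c d hasum hcsum hab hcd hpab hpcd i
      by_contra hlt
      push_neg at hlt
      -- c i < a i ; find j with a j < c j
      have hex : ∃ j, a j < c j := by
        by_contra hno
        push_neg at hno
        have : ∑ k, c k < ∑ k, a k :=
          Finset.sum_lt_sum (fun k _ => hno k) ⟨i, Finset.mem_univ i, hlt⟩
        omega
      obtain ⟨j, hj⟩ := hex
      have hai : a i ≠ 0 := by omega
      have hdi : d i ≠ 0 := by have := hab i; have := hcd i; omega
      have hcj : c j ≠ 0 := by omega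
      have hbj : b j ≠ 0 := by have := hab j; have := hcd j; omega
      have h1 : i ≤ j := hpab i j hai hbj
      have h2 : j ≤ i := hpcd j i hcj hdi
      have : i = j := le_antisymm h1 h2
      subst this
      omega
    have hyy' : y = y' := by
      funext i
      exact le_antisymm (key y z y' z' hsumy hy'sum hyz hyz' hprec hprec' i)
        (key y' z' y z hy'sum hsumy hyz' hyz hprec' hprec i)
    have hzz' : z = z' := by
      funext i
      have := hyz i; have := hyz' i
      rw [← hyy'] at *
      omega
    rw [hyy', hzz']
end

section
/- Let D = (1/2)·H₀ − (1/3)·H₁ where H₀ = V(x₀) and H₁ = V(x₁) are coordinate hyperplanes in ℙ². Then for every degree d with 0 ≤ d ≤ 5, every element of H⁰(ℙ², ⌊dD⌋) is a rational function in x₀ and x₁ only (i.e., lies in the subspace spanned by monomials x₁^a x₀^{-b} with a − b = ⌊d/2⌋ − ⌈d/3⌉ appropriately), whereas in degree 6 the element x₁²x₂/x₀³ lies in H⁰(ℙ², ⌊6D⌋) and is not a product of elements of lower positive degree; hence the generalized canonical ring R_D = ⊕_{d≥0} u^d H⁰(ℙ², ⌊dD⌋) has a generator in degree 6. -/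
/-- Exponent vectors of monomials x₀^{e₀}x₁^{e₁}x₂^{e₂} spanning
H⁰(ℙ², ⌊d((1/2)H₀ − (1/3)H₁)⌋): degree 0, e₀ ≥ −⌊d/2⌋, e₁ ≥ ⌈d/3⌉, e₂ ≥ 0. -/
def s5Mem (d : ℕ) (e : Fin 3 → ℤ) : Prop :=
  e 0 + e 1 + e 2 = 0 ∧ -2 * e 0 ≤ (d : ℤ) ∧ (d : ℤ) ≤ 3 * e 1 ∧ 0 ≤ e 2

lemma s5_low {d : ℕ} (hd : d ≤ 5) {e : Fin 3 → ℤ} (h : s5Mem d e) : e 2 = 0 := by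
  obtain ⟨h1, h2, h3, h4⟩ := h
  have : (d : ℤ) ≤ 5 := by exact_mod_cast hd
  omega

/-- for D = (1/2)H₀ − (1/3)H₁ on ℙ², in degrees d ≤ 5 all sections are rational
functions in x₀, x₁ only, while in degree 6 the section x₁²x₂/x₀³ is a new generator. -/
theorem stmt5 :
    (∀ d : ℕ, d ≤ 5 → ∀ e : Fin 3 → ℤ, s5Mem d e → e 2 = 0) ∧
    s5Mem 6 ![-3, 2, 1] ∧
    ¬ ∃ (d1 d2 : ℕ) (e1 e2 : Fin 3 → ℤ), 0 < d1 ∧ 0 < d2 ∧ d1 + d2 = 6 ∧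
        s5Mem d1 e1 ∧ s5Mem d2 e2 ∧ e1 + e2 = ![-3, 2, 1] := by
  refine ⟨fun d hd e h => s5_low hd h, ⟨by norm_num [Matrix.cons_val_two, Matrix.tail_cons], by norm_num, by norm_num, by norm_num [Matrix.cons_val_two, Matrix.tail_cons]⟩, ?_⟩
  rintro ⟨d1, d2, e1, e2, hd1, hd2, hsum, h1, h2, heq⟩
  have he1 : e1 2 = 0 := s5_low (by omega) h1
  have he2 : e2 2 = 0 := s5_low (by omega) h2
  have : (e1 + e2) 2 = 1 := by rw [heq]; norm_num [Matrix.cons_val_two, Matrix.tail_cons]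
  simp [Pi.add_apply, he1, he2] at this
end

section
/- Let α₀, …, αₙ ∈ ℚ and a₀, …, aₙ ∈ ℤ>0 with ∑ᵢ αᵢaᵢ > 0. Write αᵢ = cᵢ/kᵢ in lowest terms, and let ℓᵢ = lcm_{j≠i}(kⱼ). Define Σ = {(d, c₀,…,cₙ) ∈ ℤ^{n+2} : cᵢ ≥ −d·αᵢ for all i, ∑ᵢ aᵢcᵢ = 0, d ≥ 0}. For each i define eᵢ = (ℓᵢaᵢ, −α₀ℓᵢaᵢ, …, −α_{i−1}ℓᵢaᵢ, ℓᵢ·∑_{j≠i}αⱼaⱼ, −α_{i+1}ℓᵢaᵢ, …, −αₙℓᵢaᵢ). Then each eᵢ has all integer entries, lies in Σ, and every element of Σ lies in the ℚ≥0-span of e₀, …, eₙ. -/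
/-- the vectors eᵢ have integer entries, lie in Σ, and are extremal rays of Σ. -/
theorem stmt7 (n : ℕ) (α : Fin (n+1) → ℚ) (a : Fin (n+1) → ℤ)
    (hapos : ∀ i, 0 < a i) (hdeg : 0 < ∑ i, α i * (a i : ℚ))
    (ℓ : Fin (n+1) → ℕ)
    (hℓ : ∀ i, ℓ i = Finset.lcm (Finset.univ.erase i) (fun j => (α j).den))
    (e : Fin (n+1) → ℚ × (Fin (n+1) → ℚ))
    (he : ∀ i, e i = ((ℓ i : ℚ) * (a i : ℚ),
      fun t => if t = i then (ℓ i : ℚ) * ∑ j ∈ Finset.univ.erase i, α j * (a j : ℚ)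
               else -α t * (ℓ i : ℚ) * (a i : ℚ))) :
    (∀ i t, ∃ z : ℤ, (e i).2 t = (z : ℚ)) ∧
    (∀ i, (∀ t, -(e i).1 * α t ≤ (e i).2 t) ∧ ∑ t, (a t : ℚ) * (e i).2 t = 0) ∧
    (∀ (d : ℤ) (c : Fin (n+1) → ℤ),
      (∀ t, -(d : ℚ) * α t ≤ (c t : ℚ)) → (∑ t, a t * c t = 0) →
      ∃ r : Fin (n+1) → ℚ, (∀ i, 0 ≤ r i) ∧ ((d : ℚ) = ∑ i, r i * (e i).1) ∧
        (∀ t, (c t : ℚ) = ∑ i, r i * (e i).2 t)) := by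
  set S : ℚ := ∑ i, α i * (a i : ℚ) with hS
  have hS0 : S ≠ 0 := ne_of_gt hdeg
  have hden : ∀ i t, t ≠ i → ∃ z : ℤ, α t * (ℓ i : ℚ) = (z : ℚ) := by
    intro i t ht
    have hdvd : (α t).den ∣ ℓ i := by
      rw [hℓ i]; exact Finset.dvd_lcm (by simp [ht])
    obtain ⟨k, hk⟩ := hdvd
    refine ⟨(α t).num * k, ?_⟩
    rw [hk]; push_cast
    rw [← mul_assoc, Rat.mul_den_eq_num]
  have hℓpos : ∀ i, 0 < ℓ i := by
    intro i
    rcases Nat.eq_zero_or_pos (ℓ i) with h | h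
    · exfalso
      rw [hℓ i, Finset.lcm_eq_zero_iff] at h
      obtain ⟨j, _, hj⟩ := h
      exact (α j).den_nz hj
    · exact h
  have hℓne : ∀ i, ((ℓ i : ℚ)) ≠ 0 := fun i => Nat.cast_ne_zero.2 (hℓpos i).ne'
  have herase : ∀ i, ∑ j ∈ Finset.univ.erase i, α j * (a j : ℚ) = S - α i * a i := by
    intro i
    have h := Finset.add_sum_erase Finset.univ (fun j => α j * (a j : ℚ)) (Finset.mem_univ i)
    rw [hS]
    linarith [h]
  refine ⟨?_, ?_, ?_⟩
  · -- integrality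
    intro i t
    rw [he i]
    dsimp only
    by_cases ht : t = i
    · subst ht
      rw [if_pos rfl, Finset.mul_sum]
      have h : ∀ j ∈ Finset.univ.erase t, ∃ z : ℤ, (ℓ t : ℚ) * (α j * a j) = (z : ℚ) := by
        intro j hj
        obtain ⟨z, hz⟩ := hden t j (Finset.ne_of_mem_erase hj)
        exact ⟨z * a j, by push_cast; rw [← hz]; ring⟩
      choose z hz using h
      refine ⟨∑ j ∈ (Finset.univ.erase t).attach, z j j.2, ?_⟩
      rw [← Finset.sum_attach (Finset.univ.erase t) (fun j => (ℓ t : ℚ) * (α j * a j))]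
      push_cast
      exact Finset.sum_congr rfl fun j _ => hz j j.2
    · rw [if_neg ht]
      obtain ⟨z, hz⟩ := hden i t ht
      exact ⟨-z * a i, by push_cast; rw [← hz]; ring⟩
  · -- membership
    intro i
    rw [he i]
    constructor
    · intro t
      dsimp only
      by_cases ht : t = i
      · subst ht
        rw [if_pos rfl, herase]
        nlinarith [mul_nonneg (Nat.cast_nonneg (ℓ t) : (0:ℚ) ≤ ℓ t) hdeg.le]
      · rw [if_neg ht]
        exact le_of_eq (by ring)
    · dsimp only
      rw [← Finset.add_sum_erase Finset.univ _ (Finset.mem_univ i), if_pos rfl]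
      have h2 : ∑ t ∈ Finset.univ.erase i, (a t : ℚ) *
          (if t = i then (ℓ i : ℚ) * ∑ j ∈ Finset.univ.erase i, α j * (a j : ℚ)
            else -α t * (ℓ i : ℚ) * (a i : ℚ))
          = ∑ t ∈ Finset.univ.erase i, (-(ℓ i : ℚ) * (a i : ℚ)) * (α t * (a t : ℚ)) := by
        refine Finset.sum_congr rfl fun t ht => ?_
        rw [if_neg (Finset.ne_of_mem_erase ht)]
        ring
      rw [h2, ← Finset.mul_sum]
      ring
  · -- spanning
    intro d c hc hsum0
    simp only [he]
    set s : Fin (n+1) → ℚ := fun i => (c i : ℚ) + (d : ℚ) * α i with hs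
    have hs0 : ∀ i, 0 ≤ s i := by
      intro i
      have := hc i
      simp only [hs]
      linarith
    have hsumQ : ∑ t, (c t : ℚ) * (a t : ℚ) = 0 := by
      have h : ((∑ t, a t * c t : ℤ) : ℚ) = 0 := by rw [hsum0]; norm_num
      push_cast at h
      rw [← h]
      exact Finset.sum_congr rfl fun t _ => mul_comm _ _
    have hsa : ∑ i, s i * (a i : ℚ) = (d : ℚ) * S := by
      simp only [hs, add_mul, Finset.sum_add_distrib, hsumQ, zero_add, hS, Finset.mul_sum]
      exact Finset.sum_congr rfl fun i _ => by ring
    refine ⟨fun i => s i / ((ℓ i : ℚ) * S), fun i =>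
      div_nonneg (hs0 i) (mul_nonneg (Nat.cast_nonneg _) hdeg.le), ?_, ?_⟩
    · dsimp only
      have h1 : ∀ i : Fin (n+1), s i / ((ℓ i : ℚ) * S) * ((ℓ i : ℚ) * a i)
          = s i * (a i : ℚ) / S := by
        intro i
        field_simp [hℓne i]
      rw [Finset.sum_congr rfl fun i _ => h1 i, ← Finset.sum_div, hsa]
      exact (mul_div_cancel_right₀ (d : ℚ) hS0).symm
    · intro t
      dsimp only
      rw [← Finset.add_sum_erase Finset.univ _ (Finset.mem_univ t), if_pos rfl, herase]
      have h2 : ∑ i ∈ Finset.univ.erase t, s i / ((ℓ i : ℚ) * S) *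
          (if t = i then (ℓ i : ℚ) * ∑ j ∈ Finset.univ.erase i, α j * (a j : ℚ)
            else -α t * (ℓ i : ℚ) * (a i : ℚ))
          = (-α t / S) * ∑ i ∈ Finset.univ.erase t, s i * (a i : ℚ) := by
        rw [Finset.mul_sum]
        refine Finset.sum_congr rfl fun i hi => ?_
        rw [if_neg (Finset.ne_of_mem_erase hi).symm]
        field_simp [hℓne i]
      have hT : ∑ i ∈ Finset.univ.erase t, s i * (a i : ℚ) = (d : ℚ) * S - s t * a t := by
        have h := Finset.add_sum_erase Finset.univ (fun i => s i * (a i : ℚ)) (Finset.mem_univ t)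
        rw [hsa] at h
        linarith
      have hst : s t = (c t : ℚ) + (d : ℚ) * α t := rfl
      rw [h2, hT, hst]
      field_simp [hℓne t]
      ring
end

section
/- Let D = ∑_{i=0}^n αᵢDᵢ be a ℚ-divisor on ℙᵐ where deg Dᵢ = aᵢ > 0, αᵢ = cᵢ/kᵢ in lowest terms, deg D = ∑αᵢaᵢ > 0, and ℓᵢ = lcm_{j≠i}(kⱼ). Suppose Dᵢ = V(fᵢ) with f₀, …, f_m being m+1 linearly independent linear forms (allowing some αⱼ = 0). Then the generalized canonical ring R_D = ⊕_{d≥0} u^d H⁰(ℙᵐ, ⌊dD⌋) is generated as a k-algebra in degrees at most ∑_{i=0}^n ℓᵢaᵢ. -/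
open MvPolynomial Polynomial

/-- The monomial u^d ∏ fᵢ^{cᵢ}, as an element of K[u] for K the function field of ℙᵐ. -/
noncomputable def s9Mon (k : Type*) [Field k] (m n : ℕ)
    (f : Fin (n+1) → MvPolynomial (Fin (m+1)) k) (d : ℕ) (c : Fin (n+1) → ℤ) :
    Polynomial (FractionRing (MvPolynomial (Fin (m+1)) k)) :=
  Polynomial.C (∏ i, (algebraMap (MvPolynomial (Fin (m+1)) k)
      (FractionRing (MvPolynomial (Fin (m+1)) k)) (f i)) ^ (c i)) * Polynomial.X ^ d

/-- Conditions for u^d ∏ fᵢ^{cᵢ} to lie in u^d H⁰(ℙᵐ, ⌊dD⌋): cᵢ ≥ −dαᵢ and ∑ aᵢcᵢ = 0. -/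
def s9Cond (n : ℕ) (α : Fin (n+1) → ℚ) (a : Fin (n+1) → ℕ)
    (d : ℕ) (c : Fin (n+1) → ℤ) : Prop :=
  (∀ i, -(d : ℚ) * α i ≤ (c i : ℚ)) ∧ ∑ i, (a i : ℤ) * c i = 0

lemma s9Mon_mul (k : Type*) [Field k] (m n : ℕ)
    (f : Fin (n+1) → MvPolynomial (Fin (m+1)) k)
    (e d' : ℕ) (b c' : Fin (n+1) → ℤ)
    (h : ∀ j, f j = 0 → b j = 0) :
    s9Mon k m n f (e + d') (fun j => b j + c' j) =
      s9Mon k m n f e b * s9Mon k m n f d' c' := by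
  set F := fun i => (algebraMap (MvPolynomial (Fin (m+1)) k)
      (FractionRing (MvPolynomial (Fin (m+1)) k)) (f i)) with hF
  have hP : (∏ i, F i ^ (b i + c' i)) = (∏ i, F i ^ b i) * ∏ i, F i ^ c' i := by
    rw [← Finset.prod_mul_distrib]
    refine Finset.prod_congr rfl fun j _ => ?_
    rcases eq_or_ne (f j) 0 with hj | hj
    · simp [h j hj]
    · have hFj : F j ≠ 0 := by
        simp only [hF, ne_eq, map_eq_zero_iff _
          (IsFractionRing.injective (MvPolynomial (Fin (m+1)) k) _)]
        exact hj
      exact zpow_add₀ hFj _ _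
  unfold s9Mon
  rw [hP, map_mul, pow_add]
  ring

lemma s9key (k : Type*) [Field k] (m n : ℕ)
    (α : Fin (n+1) → ℚ) (a : Fin (n+1) → ℕ) (hapos : ∀ i, 0 < a i)
    (f : Fin (n+1) → MvPolynomial (Fin (m+1)) k)
    (i0 : Fin (n+1)) (hi0 : f i0 ≠ 0) :
    ∀ d c, s9Cond n α a d c → (∀ j, f j = 0 → c j = 0) →
      s9Mon k m n f d c ∈ Algebra.adjoin k {p | ∃ d c, s9Cond n α a d c ∧
        d ≤ ∑ i, Finset.lcm (Finset.univ.erase i) (fun j => (α j).den) * a i ∧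
        p = s9Mon k m n f d c} := by
  classical
  set ℓ : Fin (n+1) → ℕ := fun i => Finset.lcm (Finset.univ.erase i) (fun j => (α j).den)
    with hℓ
  set N := ∑ i, ℓ i * a i with hNdef
  intro d
  induction d using Nat.strong_induction_on with
  | _ d IH =>
  intro c hc hinv
  by_cases hdN : d ≤ N
  · exact Algebra.subset_adjoin ⟨d, c, hc, hdN, rfl⟩
  push_neg at hdN
  have hd0 : 0 < d := lt_of_le_of_lt (Nat.zero_le N) hdN
  have hd0q : (0:ℚ) < d := by exact_mod_cast hd0
  set Zc : Finset (Fin (n+1)) := Finset.univ.filter (fun j => f j ≠ 0) with hZc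
  have hi0m : i0 ∈ Zc := by simp [hZc, hi0]
  have hcz : ∀ j, j ∉ Zc → c j = 0 := by
    intro j hj
    apply hinv
    by_contra hfj
    exact hj (by simp [hZc, hfj])
  have hα0 : ∀ j, j ∉ Zc → 0 ≤ α j := by
    intro j hj
    have h1 := hc.1 j
    rw [hcz j hj] at h1
    push_cast at h1
    nlinarith
  set S' : ℚ := ∑ j ∈ Zc, α j * a j with hS'def
  -- sum of slacks
  have hsumc : ∑ j ∈ Zc, (a j:ℚ) * (c j:ℚ) = 0 := by
    have h2 : ((∑ j, (a j:ℤ) * c j : ℤ):ℚ) = 0 := by exact_mod_cast hc.2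
    push_cast at h2
    rw [← h2]
    exact Finset.sum_subset (Finset.subset_univ Zc)
      (fun j _ hj => by rw [hcz j hj]; simp)
  have hslack : ∑ j ∈ Zc, (a j:ℚ) * ((c j:ℚ) + d * α j) = d * S' := by
    rw [hS'def, Finset.mul_sum]
    simp only [mul_add, Finset.sum_add_distrib, hsumc, zero_add]
    exact Finset.sum_congr rfl fun j _ => by ring
  have hslack_nonneg : ∀ j, (0:ℚ) ≤ (c j:ℚ) + d * α j := by
    intro j
    have := hc.1 j
    linarith
  have hS'nonneg : 0 ≤ S' := by
    have h1 : (0:ℚ) ≤ ∑ j ∈ Zc, (a j:ℚ) * ((c j:ℚ) + d * α j) :=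
      Finset.sum_nonneg fun j _ => mul_nonneg (by positivity) (hslack_nonneg j)
    nlinarith [hslack]
  -- choose i
  have hex : ∃ i ∈ Zc, (ℓ i : ℚ) * S' ≤ (c i:ℚ) + d * α i := by
    by_contra hno
    push_neg at hno
    have hlt : ∑ j ∈ Zc, (a j:ℚ) * ((c j:ℚ) + d * α j)
        < ∑ j ∈ Zc, (a j:ℚ) * ((ℓ j:ℚ) * S') := by
      refine Finset.sum_lt_sum_of_nonempty ⟨i0, hi0m⟩ fun j hj => ?_
      have haj : (0:ℚ) < a j := by exact_mod_cast hapos j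
      exact mul_lt_mul_of_pos_left (hno j hj) haj
    have h2 : ((∑ j ∈ Zc, ℓ j * a j : ℕ) : ℚ) * S' = ∑ j ∈ Zc, (a j:ℚ) * ((ℓ j:ℚ) * S') := by
      push_cast [Finset.sum_mul]
      exact Finset.sum_congr rfl fun j _ => by ring
    have h3 : (∑ j ∈ Zc, ℓ j * a j) ≤ N :=
      Finset.sum_le_sum_of_subset (Finset.subset_univ _)
    have h3q : ((∑ j ∈ Zc, ℓ j * a j : ℕ):ℚ) ≤ (N:ℚ) := by exact_mod_cast h3
    have h4 : (N:ℚ) < (d:ℚ) := by exact_mod_cast hdN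
    nlinarith [hslack, mul_le_mul_of_nonneg_right h3q hS'nonneg,
      mul_le_mul_of_nonneg_right h4.le hS'nonneg]
  obtain ⟨i, hiZ, hsi⟩ := hex
  set L : ℕ := ℓ i with hLdef
  have hL0 : 0 < L := by
    rw [hLdef, hℓ, Nat.pos_iff_ne_zero]
    simp only [Ne, Finset.lcm_eq_zero_iff, Set.mem_image]
    rintro ⟨j, -, hj⟩
    exact (α j).den_nz hj
  set e : ℕ := L * a i with hedef
  have he1 : 1 ≤ e := Nat.mul_pos hL0 (hapos i)
  have heN : e ≤ N := by
    rw [hNdef, hedef, hLdef]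
    exact Finset.single_le_sum (f := fun i => ℓ i * a i) (fun j _ => Nat.zero_le _)
      (Finset.mem_univ i)
  have hed : e < d := lt_of_le_of_lt heN hdN
  have heq : ((e:ℕ):ℚ) = (L:ℚ) * (a i:ℚ) := by push_cast [hedef]; ring
  -- the integer L * α j for j ≠ i
  set B : Fin (n+1) → ℤ := fun j => ((L / (α j).den : ℕ) : ℤ) * (α j).num with hBdef
  have hB : ∀ j, j ≠ i → (B j : ℚ) = (L:ℚ) * α j := by
    intro j hj
    have hdvd : (α j).den ∣ L := by
      rw [hLdef, hℓ]
      exact Finset.dvd_lcm (by simp [Finset.mem_erase, hj])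
    obtain ⟨t, ht⟩ := hdvd
    have hdenpos : 0 < (α j).den := (α j).pos
    have hden0 : ((α j).den:ℚ) ≠ 0 := by exact_mod_cast hdenpos.ne'
    have hLd : L / (α j).den = t := by rw [ht]; exact Nat.mul_div_cancel_left t hdenpos
    have hnum : α j * ((α j).den:ℚ) = ((α j).num : ℚ) := Rat.mul_den_eq_num (α j)
    have hBt : ((B j):ℚ) = (t:ℚ) * ((α j).num:ℚ) := by
      rw [hBdef]
      push_cast [hLd]
      ring
    rw [hBt, ← hnum]
    push_cast [ht]
    ring
  set b : Fin (n+1) → ℤ := fun j => if j ∈ Zc then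
      (if j = i then ∑ j' ∈ Zc.erase i, (a j':ℤ) * B j' else -(a i:ℤ) * B j) else 0
    with hbdef
  have hb0 : ∀ j, j ∉ Zc → b j = 0 := by intro j hj; simp [hbdef, hj]
  have hbj : ∀ j ∈ Zc, j ≠ i → (b j:ℚ) = -(e:ℚ) * α j := by
    intro j hj hji
    have : b j = -(a i:ℤ) * B j := by simp [hbdef, hj, hji]
    rw [this]
    push_cast [hB j hji, heq]
    ring
  have hbival : b i = ∑ j' ∈ Zc.erase i, (a j':ℤ) * B j' := by simp [hbdef, hiZ]
  have hbi : (b i:ℚ) + (e:ℚ) * α i = (L:ℚ) * S' := by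
    have h1 : ((b i:ℤ):ℚ) = ∑ j' ∈ Zc.erase i, (a j':ℚ) * ((L:ℚ) * α j') := by
      rw [hbival]
      push_cast
      refine Finset.sum_congr rfl fun j' hj' => ?_
      rw [hB j' (Finset.ne_of_mem_erase hj')]
    have h2 : ∑ j' ∈ Zc.erase i, α j' * (a j':ℚ) + α i * (a i:ℚ) = S' := by
      rw [hS'def]
      exact Finset.sum_erase_add Zc _ hiZ
    rw [h1, heq]
    have h3 : ∑ j' ∈ Zc.erase i, (a j':ℚ) * ((L:ℚ) * α j')
        = (L:ℚ) * ∑ j' ∈ Zc.erase i, α j' * (a j':ℚ) := by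
      rw [Finset.mul_sum]
      exact Finset.sum_congr rfl fun j' _ => by ring
    rw [h3]
    nlinarith [h2]
  have hbsum : ∑ j, (a j:ℤ) * b j = 0 := by
    have h1 : ∑ j, (a j:ℤ) * b j = ∑ j ∈ Zc, (a j:ℤ) * b j :=
      (Finset.sum_subset (Finset.subset_univ Zc)
        (fun j _ hj => by rw [hb0 j hj]; ring)).symm
    have h2 : ∑ j ∈ Zc, (a j:ℤ) * b j
        = ∑ j ∈ Zc.erase i, (a j:ℤ) * b j + (a i:ℤ) * b i :=
      (Finset.sum_erase_add Zc _ hiZ).symm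
    have h3 : ∑ j ∈ Zc.erase i, (a j:ℤ) * b j
        = -(a i:ℤ) * ∑ j ∈ Zc.erase i, (a j:ℤ) * B j := by
      rw [Finset.mul_sum]
      refine Finset.sum_congr rfl fun j hj => ?_
      have hjZ := Finset.mem_of_mem_erase hj
      have hji := Finset.ne_of_mem_erase hj
      have : b j = -(a i:ℤ) * B j := by simp [hbdef, hjZ, hji]
      rw [this]; ring
    rw [h1, h2, h3, hbival]
    ring
  have hcondb : s9Cond n α a e b := by
    constructor
    · intro j
      by_cases hj : j ∈ Zc
      · by_cases hji : j = i
        · subst hji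
          have hLS : 0 ≤ (L:ℚ) * S' := mul_nonneg (by positivity) hS'nonneg
          nlinarith [hbi]
        · rw [hbj j hj hji]
      · rw [hb0 j hj]
        have := hα0 j hj
        have : -(e:ℚ) * α j ≤ 0 := by nlinarith [this, (Nat.cast_nonneg e : (0:ℚ) ≤ e)]
        simpa using this
    · exact hbsum
  clear hbdef hBdef hbival hS'def hslack hsumc hℓ hLdef hedef hNdef heq
  clear_value B b S' e L N ℓ
  set c' : Fin (n+1) → ℤ := fun j => c j - b j with hc'def
  have hdeq : (((d - e : ℕ)):ℚ) = (d:ℚ) - (e:ℚ) := by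
    rw [Nat.cast_sub hed.le]
  have hcondc' : s9Cond n α a (d - e) c' := by
    constructor
    · intro j
      rw [hdeq]
      simp only [hc'def]
      push_cast
      by_cases hj : j ∈ Zc
      · by_cases hji : j = i
        · subst hji
          linarith [hbi, hsi]
        · have h1 := hbj j hj hji
          have h2 := hc.1 j
          linarith [h1, h2]
      · rw [hcz j hj, hb0 j hj]
        have h1 := hα0 j hj
        have h2 : (e:ℚ) ≤ (d:ℚ) := by exact_mod_cast hed.le
        have h3 : (0:ℚ) ≤ ((d:ℚ) - (e:ℚ)) * α j := mul_nonneg (by linarith) h1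
        push_cast
        linarith
    · have := hc.2
      simp only [hc'def, mul_sub, Finset.sum_sub_distrib, hc.2, hbsum]
      ring
  have hinv' : ∀ j, f j = 0 → c' j = 0 := by
    intro j hfj
    have hjZ : j ∉ Zc := by simp [hZc, hfj]
    simp only [hc'def]
    rw [hcz j hjZ, hb0 j hjZ]
    ring
  have hmul := s9Mon_mul k m n f e (d - e) b c' (fun j hfj => hb0 j (by simp [hZc, hfj]))
  have hde : e + (d - e) = d := Nat.add_sub_cancel' hed.le
  have hbc : (fun j => b j + c' j) = c := by
    funext j
    simp only [hc'def]
    ring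
  rw [hde, hbc] at hmul
  rw [hmul]
  exact mul_mem (Algebra.subset_adjoin ⟨e, b, hcondb, heN, rfl⟩)
    (IH (d - e) (by omega) c' hcondc' hinv')

/-- R_D is generated as a k-algebra in degrees at most ∑ ℓᵢaᵢ. -/
theorem stmt9 (k : Type*) [Field k] [IsAlgClosed k] (m n : ℕ) (hm : 1 ≤ m) (hmn : m ≤ n)
    (α : Fin (n+1) → ℚ) (a : Fin (n+1) → ℕ) (hapos : ∀ i, 0 < a i)
    (hdeg : 0 < ∑ i, α i * (a i : ℚ))
    (f : Fin (n+1) → MvPolynomial (Fin (m+1)) k)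
    (hfh : ∀ i, (f i).IsHomogeneous (a i))
    (ha1 : ∀ j : Fin (m+1), a (Fin.castLE (by omega) j) = 1)
    (hind : LinearIndependent k (fun j : Fin (m+1) => f (Fin.castLE (by omega) j))) :
    Algebra.adjoin k {p | ∃ d c, s9Cond n α a d c ∧ p = s9Mon k m n f d c} =
    Algebra.adjoin k {p | ∃ d c, s9Cond n α a d c ∧
      d ≤ ∑ i, Finset.lcm (Finset.univ.erase i) (fun j => (α j).den) * a i ∧
      p = s9Mon k m n f d c} := by
  apply le_antisymm
  · apply Algebra.adjoin_le
    rintro p ⟨d, c, hc, rfl⟩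
    by_cases hz : ∃ j, f j = 0 ∧ c j ≠ 0
    · obtain ⟨j, hfj, hcj⟩ := hz
      have h0 : s9Mon k m n f d c = 0 := by
        unfold s9Mon
        rw [Finset.prod_eq_zero (Finset.mem_univ j) (by rw [hfj, map_zero, zero_zpow _ hcj])]
        simp
      rw [h0]
      exact Subalgebra.zero_mem _
    · push_neg at hz
      have hne : f (Fin.castLE (by omega) (0 : Fin (m+1))) ≠ 0 := hind.ne_zero 0
      exact s9key k m n α a hapos f _ hne d c hc hz
  · apply Algebra.adjoin_mono
    rintro p ⟨d, c, hc, _, rfl⟩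
    exact ⟨d, c, hc, rfl⟩
end

section
/- Let p, q be coprime positive integers, α = p/q, and let c₀/d₀ < c₁/d₁ < ⋯ < c_r/d_r = p/q be the Hirzebruch–Jung convergents of α, starting with c₀/d₀ = 0/1. Then every lattice point (β, γ) ∈ ℤ≥0² with γ ≤ β·α lies in the ℤ≥0-span of (d_h, c_h) and (d_{h+1}, c_{h+1}) for some index h ∈ {0, …, r−1} (or is a multiple of (d_r, c_r)). -/
/-- O'Dorney's lemma: every lattice point on or below the line of slope
p/q lies in the ℤ≥0-span of a consecutive pair of Hirzebruch–Jung convergent points. -/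
theorem stmt10 (p q : ℕ) (hp : 0 < p) (hq : 0 < q) (hco : Nat.Coprime p q)
    (r : ℕ) (c d : Fin (r+1) → ℕ)
    (hc0 : c 0 = 0) (hd0 : d 0 = 1) (hdpos : ∀ i, 0 < d i)
    (hinc : ∀ i j : Fin (r+1), i < j → (c i : ℚ) / (d i : ℚ) < (c j : ℚ) / (d j : ℚ))
    (hcl : c (Fin.last r) = p) (hdl : d (Fin.last r) = q)
    (hdet : ∀ i : Fin r,
      (c i.succ : ℤ) * (d i.castSucc : ℤ) - (c i.castSucc : ℤ) * (d i.succ : ℤ) = 1) :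
    ∀ β γ : ℕ, (γ : ℚ) * (q : ℚ) ≤ (β : ℚ) * (p : ℚ) →
      ∃ (h : Fin r) (s t : ℕ),
        β = s * d h.castSucc + t * d h.succ ∧ γ = s * c h.castSucc + t * c h.succ := by
  intro β γ hβγ
  have hr : 0 < r := by
    rcases Nat.eq_zero_or_pos r with h0 | h
    · subst h0
      rw [show Fin.last 0 = 0 from rfl, hc0] at hcl
      omega
    · exact h
  have hle : γ * q ≤ β * p := by exact_mod_cast hβγ
  classical
  set P : ℕ → Prop := fun k => β * c ⟨min k r, by omega⟩ ≤ γ * d ⟨min k r, by omega⟩ with hP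
  have hP0 : P 0 := by
    have e0 : (⟨min 0 r, by omega⟩ : Fin (r+1)) = 0 := by
      apply Fin.ext; simp
    simp only [hP, e0, hc0]
    simp
  set k := Nat.findGreatest P (r-1) with hk
  have hkr : k ≤ r - 1 := Nat.findGreatest_le _
  have hkr' : k < r := by omega
  have hPk : P k := Nat.findGreatest_spec (Nat.zero_le _) hP0
  set h : Fin r := ⟨k, hkr'⟩ with hh
  have ecs : h.castSucc = (⟨k, by omega⟩ : Fin (r+1)) := rfl
  have esc : h.succ = (⟨k+1, by omega⟩ : Fin (r+1)) := rfl
  have eL : (⟨min k r, by omega⟩ : Fin (r+1)) = h.castSucc := by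
    apply Fin.ext; simp [ecs]; omega
  have hL : β * c h.castSucc ≤ γ * d h.castSucc := by
    rw [← eL]; exact hPk
  have hR : γ * d h.succ ≤ β * c h.succ := by
    rcases Nat.lt_or_ge (k+1) r with hlt | hge
    · have hnot : ¬ P (k+1) :=
        Nat.findGreatest_is_greatest (Nat.lt_succ_self k) (by omega)
      have e1 : (⟨min (k+1) r, by omega⟩ : Fin (r+1)) = h.succ := by
        apply Fin.ext; simp [esc]; omega
      simp only [hP, e1] at hnot
      omega
    · have e1 : h.succ = Fin.last r := by
        apply Fin.ext; simp [esc]; omega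
      rw [e1, hcl, hdl]; exact hle
  have key := hdet h
  refine ⟨h, β * c h.succ - γ * d h.succ, γ * d h.castSucc - β * c h.castSucc, ?_, ?_⟩
  · zify [hL, hR]
    linear_combination (-(β : ℤ)) * key
  · zify [hL, hR]
    linear_combination (-(γ : ℤ)) * key
end
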